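/- Let A, B ∈ ℤ with B ≥ 2 and 2A − B = 3, and let M = [[0, −B], [1, −A]] acting on ℝ². For any integers a₁, a₂, a₃, a₁', a₂', a₃' with a₁ − a₁' = 1, a₂ − a₂' = A−2 and a₃ − a₃' = −1, the following identity of points of ℝ² holds: M⁻¹·(a₁·e₁) + M⁻²·(a₂·e₁) + M⁻³·(a₃·e₁) + (B−1)·Σ_{k≥0} M^{−(5+2k)}·e₁ = M⁻¹·(a₁'·e₁) + M⁻²·(a₂'·e₁) + M⁻³·(a₃'·e₁) + (B−1)·Σ_{k≥0} M^{−(4+2k)}·e₁. (In digit notation: 0.a₁a₂a₃ with periodic tail 0,(B−1),0,(B−1),… equals 0.a₁'a₂'a₃' with periodic tail (B−1),0,(B−1),0,….) -/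

import Mathlib

noncomputable section

/-- The matrix `[[0, -B], [1, -A]]` as a real matrix. -/
def M' (A B : ℤ) : Matrix (Fin 2) (Fin 2) ℝ := !![0, -(B : ℝ); 1, -(A : ℝ)]

/-- `e₁ = (1, 0) ∈ ℝ²`. -/
def e1 : Fin 2 → ℝ := ![1, 0]

open Matrix

/-- A real sequence satisfying a two-step linear recurrence whose "geometric bound"
rate `γ` is less than one is summable. -/
lemma aux_summable_of_rec (f : ℕ → ℝ) (τ δ γ : ℝ) (hτ : 0 ≤ τ) (hδ : 0 ≤ δ)
    (hγ0 : 0 < γ) (hγ1 : γ < 1) (hkey : τ * γ + δ ≤ γ ^ 2)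
    (hrec : ∀ k, f (k + 2) = τ * f (k + 1) - δ * f k) : Summable f := by
  have habs : ∀ k, |f (k + 2)| ≤ τ * |f (k + 1)| + δ * |f k| := by
    intro k
    rw [hrec k]
    calc |τ * f (k + 1) - δ * f k| ≤ |τ * f (k + 1)| + |δ * f k| := abs_sub _ _
    _ = τ * |f (k + 1)| + δ * |f k| := by
        rw [abs_mul, abs_mul, abs_of_nonneg hτ, abs_of_nonneg hδ]
  have hD0 : 0 ≤ |f 0| + |f 1| / γ := by positivity
  set D : ℝ := |f 0| + |f 1| / γ with hD
  have key : ∀ n, |f n| ≤ D * γ ^ n ∧ |f (n + 1)| ≤ D * γ ^ (n + 1) := by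
    intro n
    induction n with
    | zero =>
      constructor
      · simp only [pow_zero, mul_one, hD]
        have : 0 ≤ |f 1| / γ := by positivity
        linarith [abs_nonneg (f 0)]
      · have : D * γ ^ 1 = |f 0| * γ + |f 1| := by
          rw [hD]; field_simp
        rw [this]
        have : 0 ≤ |f 0| * γ := by positivity
        linarith
    | succ n ih =>
      refine ⟨ih.2, ?_⟩
      calc |f (n + 1 + 1)| = |f (n + 2)| := by norm_num
      _ ≤ τ * |f (n + 1)| + δ * |f n| := habs n
      _ ≤ τ * (D * γ ^ (n + 1)) + δ * (D * γ ^ n) :=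
          add_le_add (mul_le_mul_of_nonneg_left ih.2 hτ)
            (mul_le_mul_of_nonneg_left ih.1 hδ)
      _ = D * γ ^ n * (τ * γ + δ) := by ring
      _ ≤ D * γ ^ n * γ ^ 2 := by
          apply mul_le_mul_of_nonneg_left hkey
          positivity
      _ = D * γ ^ (n + 1 + 1) := by ring
  apply Summable.of_abs
  apply Summable.of_nonneg_of_le (fun k => abs_nonneg _) (fun k => (key k).1)
  exact (summable_geometric_of_lt_one hγ0.le hγ1).mul_left D

set_option maxHeartbeats 2000000 in
/-- For `B ≥ 2`, `2A - B = 3` and integers with `a₁ - a₁' = 1`,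
`a₂ - a₂' = A - 2`, `a₃ - a₃' = -1`, the point `0.a₁a₂a₃\overline{0(B-1)}`
equals the point `0.a₁'a₂'a₃'\overline{(B-1)0}`. -/
theorem digit_expansion_identity
    (A B : ℤ) (hB : 2 ≤ B) (h3 : 2 * A - B = 3)
    (a₁ a₂ a₃ a₁' a₂' a₃' : ℤ)
    (hd1 : a₁ - a₁' = 1) (hd2 : a₂ - a₂' = A - 2) (hd3 : a₃ - a₃' = -1) :
    ((M' A B)⁻¹ ^ 1).mulVec ((a₁ : ℝ) • e1) + ((M' A B)⁻¹ ^ 2).mulVec ((a₂ : ℝ) • e1)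
      + ((M' A B)⁻¹ ^ 3).mulVec ((a₃ : ℝ) • e1)
      + ((B : ℝ) - 1) • ∑' k : ℕ, ((M' A B)⁻¹ ^ (5 + 2 * k)).mulVec e1 =
    ((M' A B)⁻¹ ^ 1).mulVec ((a₁' : ℝ) • e1) + ((M' A B)⁻¹ ^ 2).mulVec ((a₂' : ℝ) • e1)
      + ((M' A B)⁻¹ ^ 3).mulVec ((a₃' : ℝ) • e1)
      + ((B : ℝ) - 1) • ∑' k : ℕ, ((M' A B)⁻¹ ^ (4 + 2 * k)).mulVec e1 := by
  -- basic scalar facts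
  have hB3 : (3 : ℤ) ≤ B := by omega
  have hbR : (3 : ℝ) ≤ (B : ℝ) := by exact_mod_cast hB3
  have hb0 : (0 : ℝ) < (B : ℝ) := by linarith
  have ha : (A : ℝ) = ((B : ℝ) + 3) / 2 := by
    have : (2 : ℝ) * (A : ℝ) - (B : ℝ) = 3 := by exact_mod_cast h3
    linarith
  set a : ℝ := (A : ℝ) with ha_def
  set b : ℝ := (B : ℝ) with hb_def
  set P : Matrix (Fin 2) (Fin 2) ℝ := M' A B with hPdef
  have hPe : P = !![0, -b; 1, -a] := rfl
  -- P is invertible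
  have hdetP : P.det = b := by rw [hPe, det_fin_two_of]; ring
  have hUdetP : IsUnit P.det := by
    rw [hdetP]; exact (isUnit_iff_ne_zero).2 (ne_of_gt hb0)
  have hPN : P * P⁻¹ = 1 := mul_nonsing_inv P hUdetP
  have hNP : P⁻¹ * P = 1 := nonsing_inv_mul P hUdetP
  -- explicit inverse
  set Q : Matrix (Fin 2) (Fin 2) ℝ := !![-a, b; -1, 0] with hQdef
  have hN : P⁻¹ = b⁻¹ • Q := by
    apply inv_eq_right_inv
    ext i j
    fin_cases i <;> fin_cases j <;>
      simp [hPe, hQdef, Matrix.mul_apply, Fin.sum_univ_two] <;>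
      field_simp <;> ring
  -- powers of P
  have hP2 : P ^ 2 = !![-b, a * b; -a, a ^ 2 - b] := by
    rw [pow_two, hPe]
    ext i j
    fin_cases i <;> fin_cases j <;>
      simp [Matrix.mul_apply, Fin.sum_univ_two] <;> ring
  have hP4 : P ^ 4 = !![b ^ 2 - a ^ 2 * b, a ^ 3 * b - 2 * a * b ^ 2;
      2 * a * b - a ^ 3, a ^ 4 - 3 * a ^ 2 * b + b ^ 2] := by
    have : P ^ 4 = P ^ 2 * P ^ 2 := by rw [show (4:ℕ) = 2+2 from rfl, pow_add]
    rw [this, hP2]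
    ext i j
    fin_cases i <;> fin_cases j <;>
      simp [Matrix.mul_apply, Fin.sum_univ_two] <;> ring
  -- the key polynomial identity for N^4
  set τ : ℝ := (a ^ 2 - 2 * b) / b ^ 2 with hτdef
  set δ : ℝ := (b ^ 2)⁻¹ with hδdef
  have hN4 : P⁻¹ ^ 4 = τ • P⁻¹ ^ 2 - δ • 1 := by
    rw [hN, smul_pow, smul_pow]
    have hQ2 : Q ^ 2 = !![a ^ 2 - b, -(a * b); a, -b] := by
      rw [pow_two, hQdef]
      ext i j
      fin_cases i <;> fin_cases j <;>
        simp [Matrix.mul_apply, Fin.sum_univ_two] <;> ring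
    have hQ4 : Q ^ 4 = !![(a^2-b)^2 - a^2*b, -((a^2-b)*(a*b)) + a*b^2;
        a*(a^2-b) - a*b, -(a^2*b) + b^2] := by
      have : Q ^ 4 = Q ^ 2 * Q ^ 2 := by rw [show (4:ℕ) = 2+2 from rfl, pow_add]
      rw [this, hQ2]
      ext i j
      fin_cases i <;> fin_cases j <;>
        simp [Matrix.mul_apply, Fin.sum_univ_two] <;> ring
    rw [hQ2, hQ4]
    ext i j
    fin_cases i <;> fin_cases j <;>
      simp [hτdef, hδdef, Matrix.smul_apply, Matrix.one_apply, smul_eq_mul] <;>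
      field_simp <;> ring
  -- the sequence of tail vectors
  set f : ℕ → (Fin 2 → ℝ) := fun k => (P⁻¹ ^ (4 + 2 * k)) *ᵥ e1 with hfdef
  have hrecvec : ∀ k, f (k + 2) = τ • f (k + 1) - δ • f k := by
    intro k
    have e4 : P⁻¹ ^ (4 + 2 * (k + 2)) = P⁻¹ ^ (4 + 2 * k) * P⁻¹ ^ 4 := by
      rw [← pow_add, show 4 + 2 * k + 4 = 4 + 2 * (k + 2) by omega]
    have e2 : P⁻¹ ^ (4 + 2 * (k + 1)) = P⁻¹ ^ (4 + 2 * k) * P⁻¹ ^ 2 := by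
      rw [← pow_add, show 4 + 2 * k + 2 = 4 + 2 * (k + 1) by omega]
    show P⁻¹ ^ (4 + 2 * (k + 2)) *ᵥ e1
        = τ • (P⁻¹ ^ (4 + 2 * (k + 1)) *ᵥ e1) - δ • (P⁻¹ ^ (4 + 2 * k) *ᵥ e1)
    rw [e4, e2, hN4, mul_sub, mul_smul_comm, mul_smul_comm, mul_one, sub_mulVec,
      smul_mulVec, smul_mulVec]
  -- rate facts
  set γ : ℝ := (τ + 1) / 2 with hγdef
  have hτ0 : 0 ≤ τ := by
    rw [hτdef]
    apply div_nonneg _ (by positivity)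
    rw [ha]; nlinarith [sq_nonneg (b - 1)]
  have hδ0 : 0 ≤ δ := by rw [hδdef]; positivity
  have hτ1 : τ < 1 := by
    rw [hτdef, div_lt_one (by positivity)]
    rw [ha]; nlinarith
  have hγ0 : 0 < γ := by rw [hγdef]; linarith
  have hγ1 : γ < 1 := by rw [hγdef]; linarith
  have hkey : τ * γ + δ ≤ γ ^ 2 := by
    have h4 : 4 * b ^ 2 + (a ^ 2 - 2 * b) ^ 2 ≤ (b ^ 2) ^ 2 := by
      have h9 : 9 ≤ b ^ 2 := by nlinarith
      rw [ha]
      nlinarith [h9, sq_nonneg b, mul_le_mul h9 h9 (by positivity) (by positivity),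
        mul_le_mul h9 hbR (by norm_num) (by positivity)]
    have h1 : 4 * δ + τ ^ 2 ≤ 1 := by
      have heq : 4 * δ + τ ^ 2 = (4 * b ^ 2 + (a ^ 2 - 2 * b) ^ 2) / (b ^ 2) ^ 2 := by
        rw [hτdef, hδdef]; field_simp
      rw [heq, div_le_one (by positivity)]
      exact h4
    rw [hγdef]
    nlinarith [h1]
  -- summability
  have hsum : Summable f := by
    rw [Pi.summable]
    intro i
    apply aux_summable_of_rec (fun k => f k i) τ δ γ hτ0 hδ0 hγ0 hγ1 hkey
    intro k
    have := congrFun (hrecvec k) i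
    simpa using this
  -- tsum machinery
  set S : Fin 2 → ℝ := ∑' k, f k with hSdef
  have hmap : ∀ (X : Matrix (Fin 2) (Fin 2) ℝ) (g : ℕ → Fin 2 → ℝ), Summable g →
      ∑' k, X *ᵥ g k = X *ᵥ ∑' k, g k := by
    intro X g hg
    have h := (LinearMap.toContinuousLinearMap (Matrix.mulVecLin X)).map_tsum hg
    simpa [Matrix.mulVecLin_apply] using h.symm
  have hc : Commute P P⁻¹ := by unfold Commute SemiconjBy; rw [hPN, hNP]
  have hP4N4 : P ^ 4 * P⁻¹ ^ 4 = 1 := by rw [← hc.mul_pow, hPN, one_pow]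
  have hP2N2 : P ^ 2 * P⁻¹ ^ 2 = 1 := by rw [← hc.mul_pow, hPN, one_pow]
  have hP4N2 : P ^ 4 * P⁻¹ ^ 2 = P ^ 2 := by
    calc P ^ 4 * P⁻¹ ^ 2 = P ^ 2 * (P ^ 2 * P⁻¹ ^ 2) := by
          rw [← mul_assoc, ← pow_add]
      _ = P ^ 2 := by rw [hP2N2, mul_one]
  have hshift : S = f 0 + (P⁻¹ ^ 2) *ᵥ S := by
    have h0 : S = f 0 + ∑' k, f (k + 1) := by
      rw [hSdef]; exact hsum.tsum_eq_zero_add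
    have h1 : ∀ k : ℕ, f (k + 1) = (P⁻¹ ^ 2) *ᵥ f k := by
      intro k
      show P⁻¹ ^ (4 + 2 * (k + 1)) *ᵥ e1 = (P⁻¹ ^ 2) *ᵥ (P⁻¹ ^ (4 + 2 * k) *ᵥ e1)
      rw [mulVec_mulVec, ← pow_add, show 2 + (4 + 2 * k) = 4 + 2 * (k + 1) by omega]
    conv_lhs => rw [h0]
    congr 1
    rw [tsum_congr h1, hmap _ f hsum, ← hSdef]
  have hf0 : P ^ 4 *ᵥ f 0 = e1 := by
    show P ^ 4 *ᵥ (P⁻¹ ^ (4 + 2 * 0) *ᵥ e1) = e1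
    rw [show 4 + 2 * 0 = 4 by norm_num, mulVec_mulVec, hP4N4, one_mulVec]
  have hstep : P ^ 4 *ᵥ S = e1 + P ^ 2 *ᵥ S := by
    conv_lhs => rw [hshift]
    rw [mulVec_add, hf0, mulVec_mulVec, hP4N2]
  have hTS : (P ^ 4 - P ^ 2) *ᵥ S = e1 := by
    rw [sub_mulVec, hstep]; abel
  -- the explicit matrix T and solution w
  set T : Matrix (Fin 2) (Fin 2) ℝ := P ^ 4 - P ^ 2 with hTdef
  have hTe : T = !![b^2 - a^2*b + b, a^3*b - 2*a*b^2 - a*b;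
      2*a*b - a^3 + a, a^4 - 3*a^2*b + b^2 - a^2 + b] := by
    rw [hTdef, hP2, hP4]
    ext i j
    fin_cases i <;> fin_cases j <;> simp <;> ring
  set d : ℝ := b ^ 2 * ((1 + a + b) * (1 - a + b)) with hddef
  have hf1 : (1 : ℝ) + a + b ≠ 0 := by rw [ha]; intro h; nlinarith
  have hf2 : (1 : ℝ) - a + b ≠ 0 := by rw [ha]; intro h; nlinarith
  have hbne : b ≠ 0 := ne_of_gt hb0
  have hd0 : d ≠ 0 := by
    rw [hddef]
    exact mul_ne_zero (pow_ne_zero 2 hbne) (mul_ne_zero hf1 hf2)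
  have hdT : T.det = d := by rw [hTe, det_fin_two_of, hddef]; ring
  have hUdT : IsUnit T.det := by rw [hdT]; exact isUnit_iff_ne_zero.2 hd0
  set w : Fin 2 → ℝ :=
    d⁻¹ • ![a^4 - 3*a^2*b + b^2 - a^2 + b, -(2*a*b - a^3 + a)] with hwdef
  have hTw : T *ᵥ w = e1 := by
    rw [hwdef, hddef, mulVec_smul, hTe]
    ext i
    fin_cases i
    · simp [Matrix.mulVec, dotProduct, Fin.sum_univ_two, e1]
      field_simp
      ring
    · simp only [Pi.smul_apply, Matrix.mulVec, dotProduct, Fin.sum_univ_two,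
        Matrix.cons_val', Matrix.cons_val_zero, Matrix.cons_val_one, Matrix.head_cons,
        Matrix.empty_val', Matrix.cons_val_fin_one, Matrix.of_apply, smul_eq_mul, e1,
        Fin.mk_zero, Fin.mk_one, Matrix.head_fin_const, Matrix.vecHead, Matrix.vecTail]
      ring
  have hSw : S = w := by
    have h1 : T⁻¹ *ᵥ (T *ᵥ S) = T⁻¹ *ᵥ (T *ᵥ w) := by rw [hTS, hTw]
    rwa [mulVec_mulVec, mulVec_mulVec, nonsing_inv_mul T hUdT, one_mulVec,
      one_mulVec] at h1
  -- the two tsums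
  have hsum5 : ∑' k : ℕ, (P⁻¹ ^ (5 + 2 * k)) *ᵥ e1 = P⁻¹ *ᵥ w := by
    have h1 : ∀ k : ℕ, P⁻¹ ^ (5 + 2 * k) *ᵥ e1 = P⁻¹ *ᵥ f k := by
      intro k
      show _ = P⁻¹ *ᵥ (P⁻¹ ^ (4 + 2 * k) *ᵥ e1)
      rw [mulVec_mulVec, ← pow_succ', show (4 + 2 * k) + 1 = 5 + 2 * k by omega]
    rw [tsum_congr h1, hmap _ f hsum, ← hSdef, hSw]
  -- explicit small powers of the inverse
  have hN1 : P⁻¹ ^ 1 = b⁻¹ • Q := by rw [pow_one, hN]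
  have hN2 : P⁻¹ ^ 2 = (b ^ 2)⁻¹ • !![a^2 - b, -(a*b); a, -b] := by
    rw [hN, smul_pow, inv_pow]
    congr 1
    rw [pow_two, hQdef]
    ext i j
    fin_cases i <;> fin_cases j <;>
      simp [Matrix.mul_apply, Fin.sum_univ_two] <;> ring
  have hN3 : P⁻¹ ^ 3 = (b ^ 3)⁻¹ • !![-(a^3) + 2*a*b, a^2*b - b^2; -(a^2) + b, a*b] := by
    rw [hN, smul_pow, inv_pow]
    congr 1
    rw [show (3 : ℕ) = 2 + 1 from rfl, pow_add, pow_two, pow_one, hQdef]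
    ext i j
    fin_cases i <;> fin_cases j <;>
      simp [Matrix.mul_apply, Fin.sum_univ_two] <;> ring
  -- cast facts for the digits
  have ca1 : (a₁ : ℝ) = (a₁' : ℝ) + 1 := by
    have : a₁ = a₁' + 1 := by omega
    exact_mod_cast this
  have ca2 : (a₂ : ℝ) = (a₂' : ℝ) + a - 2 := by
    have : a₂ = a₂' + A - 2 := by omega
    rw [ha_def]; exact_mod_cast this
  have ca3 : (a₃ : ℝ) = (a₃' : ℝ) - 1 := by
    have : a₃ = a₃' - 1 := by omega
    exact_mod_cast this
  -- finish by explicit computation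
  rw [hsum5, hSw, hN1, hN2, hN3, hwdef, hddef, hN, ca1, ca2, ca3]
  ext i
  fin_cases i
  · simp [Matrix.mulVec, dotProduct, Fin.sum_univ_two, e1, hQdef]
    field_simp
    rw [ha]
    ring
  · simp [Matrix.mulVec, dotProduct, Fin.sum_univ_two, e1, hQdef]
    field_simp
    rw [ha]
    ring
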